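/- Under conditions: q odd prime power, m > 3, 2 ≤ k ≤ m-2, and q^m - 1 - Σ_{i=1}^{m-1} C(m-1,i)(q-1)^i - Σ_{i=1}^{k} C(m-1,i)(q-1)^i ≥ Σ_{i=1}^{k} C(m,i)(q-1)^i, the minimum nonzero Hamming weight of the code C_f equals Σ_{i=1}^{k} C(m,i)(q-1)^i and the maximum Hamming weight is at least q^m - q^{m-1}. -/

import Mathlib

open Finset

section Aux

variable {F : Type*} [Field F] [DecidableEq F] [Fintype F]

lemma card_supp_eq {ι : Type*} [Fintype ι] [DecidableEq ι] (T : Finset ι) :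
    ((univ : Finset (ι → F)).filter fun x => univ.filter (fun j => x j ≠ 0) = T).card
      = (Fintype.card F - 1) ^ T.card := by
  induction T using Finset.induction with
  | empty =>
      rw [Finset.card_eq_one.mpr ⟨(0 : ι → F), ?_⟩]
      · simp
      · ext x
        simp only [mem_filter, mem_univ, true_and, mem_singleton, Finset.filter_eq_empty_iff]
        constructor
        · intro h; funext j; by_contra hj; exact h trivial hj
        · intro h; subst h; simp
  | @insert a T ha ih =>
      rw [Finset.card_insert_of_notMem ha, pow_succ]
      rw [← ih]
      have hcF : (Fintype.card F - 1) = ((univ : Finset F).filter (fun b => b ≠ 0)).card := by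
        simp [Finset.filter_ne', Finset.card_erase_of_mem]
      rw [hcF, ← Finset.card_product]
      apply Finset.card_nbij' (fun x => (Function.update x a 0, x a))
        (fun p => Function.update p.1 a p.2)
      · -- hi
        intro x hx
        simp only [Finset.mem_coe, mem_filter, mem_univ, true_and] at hx
        have hxa : x a ≠ 0 := by
          have : a ∈ univ.filter (fun j => x j ≠ 0) := by rw [hx]; exact mem_insert_self a T
          exact (mem_filter.mp this).2
        refine Finset.mem_coe.mpr (Finset.mem_product.mpr ⟨?_, by simp [hxa]⟩)
        simp only [mem_filter, mem_univ, true_and]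
        ext j
        simp only [mem_filter, mem_univ, true_and]
        rcases eq_or_ne j a with rfl | hj
        · simp [Function.update_self]; exact ha
        · rw [Function.update_of_ne hj]
          constructor
          · intro hxj
            have : j ∈ insert a T := by rw [← hx]; simp [hxj]
            exact (Finset.mem_insert.mp this).resolve_left hj
          · intro hjT
            have : j ∈ insert a T := Finset.mem_insert_of_mem hjT
            rw [← hx] at this
            exact (mem_filter.mp this).2
      · -- hj
        intro p hp
        rw [Finset.mem_coe, Finset.mem_product] at hp
        simp only [Finset.mem_coe, mem_filter, mem_univ, true_and] at hp ⊢
        obtain ⟨h1, h2⟩ := hp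
        ext j
        simp only [mem_filter, mem_univ, true_and]
        rcases eq_or_ne j a with rfl | hj
        · simp [Function.update_self, h2]
        · rw [Function.update_of_ne hj, Finset.mem_insert]
          constructor
          · intro hpj
            right
            have : j ∈ univ.filter (fun i => p.1 i ≠ 0) := by simp [hpj]
            rwa [h1] at this
          · rintro (rfl | hjT)
            · exact absurd rfl hj
            · have : j ∈ univ.filter (fun i => p.1 i ≠ 0) := by rw [h1]; exact hjT
              exact (mem_filter.mp this).2
      · -- left_inv
        intro x hx
        simp only [Finset.mem_coe, mem_filter, mem_univ, true_and] at hx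
        funext j
        rcases eq_or_ne j a with rfl | hj
        · simp [Function.update_self]
        · simp [Function.update_of_ne hj]
      · -- right_inv
        intro p hp
        rw [Finset.mem_coe, Finset.mem_product] at hp
        simp only [mem_filter, mem_univ, true_and] at hp
        have hpa : p.1 a = 0 := by
          by_contra h
          have : a ∈ univ.filter (fun i => p.1 i ≠ 0) := by simp [h]
          rw [hp.1] at this; exact ha this
        have : Function.update (Function.update p.1 a p.2) a 0 = p.1 := by
          funext j
          rcases eq_or_ne j a with rfl | hj
          · simp [Function.update_self, hpa]
          · simp [Function.update_of_ne hj]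
        rw [Prod.ext_iff]
        exact ⟨this, by simp [Function.update_self]⟩

lemma card_wt_eq {ι : Type*} [Fintype ι] [DecidableEq ι] (i : ℕ) :
    ((univ : Finset (ι → F)).filter fun x => (univ.filter (fun j => x j ≠ 0)).card = i).card
      = (Fintype.card ι).choose i * (Fintype.card F - 1) ^ i := by
  rw [Finset.card_eq_sum_card_fiberwise
    (f := fun x : ι → F => univ.filter (fun j => x j ≠ 0)) (t := Finset.powersetCard i univ)
    (fun x hx => by
      rw [Finset.mem_coe, Finset.mem_powersetCard]
      exact ⟨Finset.subset_univ _, (mem_filter.mp (Finset.mem_coe.mp hx)).2⟩)]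
  rw [Finset.sum_congr rfl (fun T hT => ?_), Finset.sum_const, Finset.card_powersetCard,
    Finset.card_univ, smul_eq_mul]
  have hTc : T.card = i := (Finset.mem_powersetCard.mp hT).2
  rw [Finset.filter_filter]
  rw [show ((univ : Finset (ι → F)).filter fun x =>
      (univ.filter (fun j => x j ≠ 0)).card = i ∧ univ.filter (fun j => x j ≠ 0) = T)
      = (univ : Finset (ι → F)).filter fun x => univ.filter (fun j => x j ≠ 0) = T from
    Finset.filter_congr fun x _ => ⟨fun h => h.2, fun h => ⟨by rw [h, hTc], h⟩⟩]
  rw [card_supp_eq, hTc]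

lemma card_wt_Icc {ι : Type*} [Fintype ι] [DecidableEq ι] (a b : ℕ) :
    ((univ : Finset (ι → F)).filter fun x =>
        (univ.filter (fun j => x j ≠ 0)).card ∈ Finset.Icc a b).card
      = ∑ i ∈ Finset.Icc a b, (Fintype.card ι).choose i * (Fintype.card F - 1) ^ i := by
  rw [Finset.card_eq_sum_card_fiberwise
    (f := fun x : ι → F => (univ.filter (fun j => x j ≠ 0)).card) (t := Finset.Icc a b)
    (fun x hx => Finset.mem_coe.mpr (mem_filter.mp (Finset.mem_coe.mp hx)).2)]
  refine Finset.sum_congr rfl fun i hi => ?_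
  rw [Finset.filter_filter, ← card_wt_eq (F := F) (ι := ι) i]
  congr 1
  apply Finset.filter_congr
  intro x _
  constructor
  · rintro ⟨_, h⟩; exact h
  · intro h; exact ⟨by simpa [h] using hi, h⟩

lemma sum_split {ι : Type*} [Fintype ι] [DecidableEq ι] (f : ι → F) (j : ι) :
    ∑ l, f l = f j + ∑ l : {t : ι // t ≠ j}, f l.1 := by
  rw [← Finset.sum_subtype (univ \ {j}) (by simp) f]
  rw [Finset.sum_eq_add_sum_sdiff_singleton_of_mem (mem_univ j)]

lemma card_hyperplane {ι : Type*} [Fintype ι] [DecidableEq ι] (v : ι → F) (j : ι)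
    (hvj : v j ≠ 0) (c : F) :
    ((univ : Finset (ι → F)).filter fun x => ∑ l, v l * x l = c).card
      = Fintype.card F ^ (Fintype.card ι - 1) := by
  have hcard : Fintype.card {t : ι // t ≠ j} = Fintype.card ι - 1 := by
    simp [Fintype.card_subtype_compl]
  rw [← hcard, ← Fintype.card_fun, ← Finset.card_univ (α := ({t : ι // t ≠ j} → F))]
  apply Finset.card_nbij' (fun x => fun l : {t : ι // t ≠ j} => x l.1)
    (fun y => fun l : ι => if h : l = j then (v j)⁻¹ * (c - ∑ l' : {t : ι // t ≠ j}, v l'.1 * y l') else y ⟨l, h⟩)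
  · intro x _; exact mem_univ _
  · intro y _
    simp only [Finset.mem_coe, mem_filter, mem_univ, true_and]
    rw [sum_split _ j]
    rw [dif_pos rfl]
    have : ∀ l' : {t : ι // t ≠ j}, v l'.1 * (if h : l'.1 = j then (v j)⁻¹ * (c - ∑ l'' : {t : ι // t ≠ j}, v l''.1 * y l'') else y ⟨l'.1, h⟩) = v l'.1 * y l' := by
      intro l'; rw [dif_neg l'.2]
    rw [Finset.sum_congr rfl (fun l' _ => this l'), mul_inv_cancel_left₀ hvj]
    ring
  · intro x hx
    simp only [Finset.mem_coe, mem_filter, mem_univ, true_and] at hx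
    funext l
    rcases eq_or_ne l j with rfl | hl
    · simp only [dif_pos rfl]
      rw [sum_split (fun l' => v l' * x l') l] at hx
      have h2 : c - ∑ l' : {t // t ≠ l}, v l'.1 * x l'.1 = v l * x l := by
        linear_combination -hx
      rw [h2, inv_mul_cancel_left₀ hvj]
      simp
    · simp [dif_neg hl]
  · intro y _
    funext l
    simp [dif_neg l.2]

/-- extension of y by the value making the v-sum equal to 0 at coordinate j -/
noncomputable def extz {ι : Type*} [DecidableEq ι] (v : ι → F) (j : ι)
    [Fintype {t : ι // t ≠ j}] (y : {t : ι // t ≠ j} → F) : ι → F :=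
  fun l => if h : l = j then (v j)⁻¹ * (0 - ∑ l' : {t : ι // t ≠ j}, v l'.1 * y l') else y ⟨l, h⟩

lemma extz_sum {ι : Type*} [Fintype ι] [DecidableEq ι] (v : ι → F) (j : ι) (hvj : v j ≠ 0)
    (y : {t : ι // t ≠ j} → F) : ∑ l, v l * extz v j y l = 0 := by
  rw [sum_split _ j]
  unfold extz
  rw [dif_pos rfl]
  have h : ∀ l' : {t : ι // t ≠ j}, v l'.1 *
      (if h : l'.1 = j then (v j)⁻¹ * (0 - ∑ l'' : {t : ι // t ≠ j}, v l''.1 * y l'') else y ⟨l'.1, h⟩)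
      = v l'.1 * y l' := by
    intro l'; rw [dif_neg l'.2]
  rw [Finset.sum_congr rfl (fun l' _ => h l'), mul_inv_cancel_left₀ hvj]
  ring

lemma extz_restrict {ι : Type*} [DecidableEq ι] (v : ι → F) (j : ι)
    [Fintype {t : ι // t ≠ j}] (y : {t : ι // t ≠ j} → F) (l : {t : ι // t ≠ j}) :
    extz v j y l.1 = y l := by
  unfold extz; rw [dif_neg l.2]

lemma card_subtype_filter {ι : Type*} [Fintype ι] [DecidableEq ι] (j : ι) (x : ι → F) :
    ((univ : Finset {t : ι // t ≠ j}).filter fun l => x l.1 ≠ 0).card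
      = (((univ : Finset ι).filter fun l => x l ≠ 0).erase j).card := by
  apply Finset.card_bij (fun l _ => l.1)
  · intro a ha
    simp only [mem_filter, mem_univ, true_and] at ha
    simp only [Finset.mem_erase, mem_filter, mem_univ, true_and]
    exact ⟨a.2, ha⟩
  · intro a _ b _ h; exact Subtype.ext h
  · intro b hb
    simp only [Finset.mem_erase, mem_filter, mem_univ, true_and] at hb
    exact ⟨⟨b, hb.1⟩, by simp [hb.2], rfl⟩

lemma card_T2_le_Hlow {ι : Type*} [Fintype ι] [DecidableEq ι] (v : ι → F) (j : ι)
    (hvj : v j ≠ 0) (k : ℕ) (hk : 1 ≤ k) :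
    ((univ : Finset ({t : ι // t ≠ j} → F)).filter fun y =>
        (univ.filter fun l => y l ≠ 0).card ∈ Finset.Icc 1 (k-1)).card
      ≤ ((univ : Finset (ι → F)).filter fun x =>
        (univ.filter fun l => x l ≠ 0).card ∈ Finset.Icc 1 k ∧ ∑ l, v l * x l = 0).card := by
  apply Finset.card_le_card_of_injOn (extz v j)
  · intro y hy
    simp only [Finset.mem_coe, mem_filter, mem_univ, true_and, Finset.mem_Icc] at hy ⊢
    have hrest := card_subtype_filter j (extz v j y)
    have hre : ((univ : Finset {t : ι // t ≠ j}).filter fun l => extz v j y l.1 ≠ 0)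
        = ((univ : Finset {t : ι // t ≠ j}).filter fun l => y l ≠ 0) := by
      apply Finset.filter_congr; intro l _; rw [extz_restrict]
    rw [hre] at hrest
    set Sx := (univ : Finset ι).filter fun l => extz v j y l ≠ 0 with hSx
    refine ⟨⟨?_, ?_⟩, extz_sum v j hvj y⟩
    · have h1 : (Sx.erase j).card ≤ Sx.card := Finset.card_erase_le
      omega
    · have h2 : Sx.card ≤ (Sx.erase j).card + 1 := by
        by_cases hj : j ∈ Sx
        · rw [Finset.card_erase_of_mem hj]; omega
        · rw [Finset.erase_eq_of_notMem hj]; omega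
      omega
  · intro y hy y' hy' h
    funext l
    rw [← extz_restrict v j y l, ← extz_restrict v j y' l, h]

lemma ncard_eq_filter_card {γ : Type*} [Fintype γ] (P : γ → Prop) [DecidablePred P] :
    Set.ncard {x | P x} = ((univ : Finset γ).filter P).card := by
  rw [show {x | P x} = ↑((univ : Finset γ).filter P) by ext a; simp]
  exact Set.ncard_coe_finset _

lemma card_scaling {ι : Type*} [Fintype ι] [DecidableEq ι] {k : ℕ} {α : ℕ → F}
    (hα : ∀ i, 1 ≤ i → i ≤ k → α i ≠ 0) (u : F) (hu : u ≠ 0) (v : ι → F) (f : (ι → F) → F)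
    (hf : ∀ x, (univ.filter fun l => x l ≠ 0).card ≤ k → f x = α ((univ.filter fun l => x l ≠ 0).card)) :
    ((univ : Finset (ι → F)).filter fun x =>
        (univ.filter fun l => x l ≠ 0).card ∈ Finset.Icc 1 k ∧ u * f x + ∑ l, v l * x l = 0).card
      * (Fintype.card F - 1)
    ≤ ((univ : Finset (ι → F)).filter fun x =>
        (univ.filter fun l => x l ≠ 0).card ∈ Finset.Icc 1 k ∧ ∑ l, v l * x l ≠ 0).card := by
  classical
  have hca : (Fintype.card F - 1) = ((univ : Finset F).filter (fun b => b ≠ 0)).card := by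
    simp [Finset.filter_ne', Finset.card_erase_of_mem]
  rw [hca, ← Finset.card_product]
  have key : ∀ x : ι → F, (univ.filter fun l => x l ≠ 0).card ∈ Finset.Icc 1 k →
      u * f x + ∑ l, v l * x l = 0 → ∑ l, v l * x l = - (u * α ((univ.filter fun l => x l ≠ 0).card)) ∧
        ∑ l, v l * x l ≠ 0 := by
    intro x hw hz
    rw [Finset.mem_Icc] at hw
    rw [hf x hw.2] at hz
    constructor
    · linear_combination hz
    · intro h0
      rw [h0, add_zero, mul_eq_zero] at hz
      rcases hz with h | h
      · exact hu h
      · exact hα _ hw.1 hw.2 h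
  apply Finset.card_le_card_of_injOn (fun p => fun l => p.2 * p.1 l)
  · rintro ⟨x, lam⟩ hp
    rw [Finset.mem_coe, Finset.mem_product] at hp
    simp only [Finset.mem_coe, mem_filter, mem_univ, true_and] at hp ⊢
    obtain ⟨⟨hw, hz⟩, hlam⟩ := hp
    have hwt : ((univ : Finset ι).filter fun l => lam * x l ≠ 0) = (univ.filter fun l => x l ≠ 0) := by
      apply Finset.filter_congr; intro l _
      simp [mul_eq_zero, hlam]
    constructor
    · rw [hwt]; exact hw
    · have := (key x hw hz).2
      have hsum : ∑ l, v l * (lam * x l) = lam * ∑ l, v l * x l := by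
        rw [Finset.mul_sum]; apply Finset.sum_congr rfl; intro l _; ring
      rw [hsum]
      exact mul_ne_zero hlam this
  · rintro ⟨x, lam⟩ hp ⟨x', lam'⟩ hp' heq
    rw [Finset.mem_coe, Finset.mem_product] at hp hp'
    simp only [mem_filter, mem_univ, true_and] at hp hp'
    simp only at heq
    obtain ⟨⟨hw, hz⟩, hlam⟩ := hp
    obtain ⟨⟨hw', hz'⟩, hlam'⟩ := hp'
    have hwt : ((univ : Finset ι).filter fun l => x l ≠ 0) = (univ.filter fun l => x' l ≠ 0) := by
      have h1 : ((univ : Finset ι).filter fun l => lam * x l ≠ 0) = (univ.filter fun l => x l ≠ 0) := by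
        apply Finset.filter_congr; intro l _; simp [mul_eq_zero, hlam]
      have h2 : ((univ : Finset ι).filter fun l => lam' * x' l ≠ 0) = (univ.filter fun l => x' l ≠ 0) := by
        apply Finset.filter_congr; intro l _; simp [mul_eq_zero, hlam']
      rw [← h1, ← h2]
      apply Finset.filter_congr; intro l _
      constructor <;> intro hh <;> [rw [← congrFun heq l]; rw [congrFun heq l]] <;> exact hh
    obtain ⟨hc, hcne⟩ := key x hw hz
    obtain ⟨hc', hcne'⟩ := key x' hw' hz'
    rw [hwt] at hc
    have hsums : ∑ l, v l * (lam * x l) = ∑ l, v l * (lam' * x' l) := by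
      apply Finset.sum_congr rfl; intro l _; rw [congrFun heq l]
    have h3 : lam * ∑ l, v l * x l = lam' * ∑ l, v l * x' l := by
      rw [Finset.mul_sum, Finset.mul_sum]
      calc ∑ l, lam * (v l * x l) = ∑ l, v l * (lam * x l) := by
            apply Finset.sum_congr rfl; intro l _; ring
        _ = ∑ l, v l * (lam' * x' l) := hsums
        _ = ∑ l, lam' * (v l * x' l) := by apply Finset.sum_congr rfl; intro l _; ring
    rw [hc, hc'] at h3
    have hll : lam = lam' := by
      have hne : - (u * α ((univ.filter fun l => x' l ≠ 0).card)) ≠ 0 := by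
        rw [← hc']; exact hcne'
      exact mul_right_cancel₀ hne h3
    subst hll
    have hx : x = x' := by
      funext l
      have := congrFun heq l
      exact mul_left_cancel₀ hlam this
    rw [hx]

lemma wt_pos_iff {ι : Type*} [Fintype ι] (x : ι → F) :
    1 ≤ ((univ : Finset ι).filter fun j => x j ≠ 0).card ↔ x ≠ 0 := by
  rw [Nat.one_le_iff_ne_zero, Ne, Finset.card_eq_zero, Finset.filter_eq_empty_iff]
  constructor
  · intro h hx
    apply h
    intro j _
    simp [hx]
  · intro hx h
    apply hx
    funext j
    by_contra hj
    exact h (mem_univ j) hj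

end Aux

lemma sum_Icc_choose_pow (q n : ℕ) (hq : 1 ≤ q) :
    1 + ∑ i ∈ Finset.Icc 1 n, n.choose i * (q-1)^i = q^n := by
  have h := add_pow (q - 1) 1 n (R := ℕ)
  rw [Nat.sub_add_cancel hq] at h
  rw [h]
  have hr : Finset.range (n+1) = insert 0 (Finset.Icc 1 n) := by
    ext i; simp [Finset.mem_Icc]; omega
  rw [hr, Finset.sum_insert (by simp)]
  simp only [one_pow, mul_one, pow_zero, Nat.choose_zero_right]
  congr 1
  exact Finset.sum_congr rfl fun i _ => by simp [Nat.cast_id, mul_comm]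


/-- The function f of the paper: f(x) = α_{w(x)} if w(x) ≤ k, and 0 otherwise,
where w(x) is the number of nonzero coordinates of x. -/
def fDH {F : Type*} [Field F] [DecidableEq F] {m : ℕ} (k : ℕ) (α : ℕ → F)
    (x : Fin m → F) : F :=
  if (Finset.univ.filter fun j => x j ≠ 0).card ≤ k then
    α ((Finset.univ.filter fun j => x j ≠ 0).card)
  else 0

set_option maxHeartbeats 2000000 in
/-- Under Condition (1), the minimum nonzero weight of C_f equals
Σ_{i=1}^{k} C(m,i)(q-1)^i and the maximum weight is at least q^m - q^(m-1). -/
theorem stmt9 {F : Type*} [Field F] [Fintype F] [DecidableEq F] (q m k : ℕ)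
    (hq : Fintype.card F = q) (hodd : Odd q) (hm : 3 < m) (hk1 : 2 ≤ k) (hk2 : k ≤ m - 2)
    (α : ℕ → F) (hα : ∀ i, 1 ≤ i → i ≤ k → α i ≠ 0)
    (hcond : ∑ i ∈ Finset.Icc 1 k, m.choose i * (q - 1) ^ i ≤
      q ^ m - 1 - ∑ i ∈ Finset.Icc 1 (m - 1), (m - 1).choose i * (q - 1) ^ i -
        ∑ i ∈ Finset.Icc 1 k, (m - 1).choose i * (q - 1) ^ i) :
    (∀ (u : F) (v : Fin m → F), ¬(u = 0 ∧ v = 0) →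
      ∑ i ∈ Finset.Icc 1 k, m.choose i * (q - 1) ^ i ≤
        Set.ncard {x : Fin m → F | x ≠ 0 ∧ u * fDH k α x + ∑ j, v j * x j ≠ 0}) ∧
    (∃ (u : F) (v : Fin m → F), ¬(u = 0 ∧ v = 0) ∧
      Set.ncard {x : Fin m → F | x ≠ 0 ∧ u * fDH k α x + ∑ j, v j * x j ≠ 0} =
        ∑ i ∈ Finset.Icc 1 k, m.choose i * (q - 1) ^ i) ∧
    (∃ (u : F) (v : Fin m → F),
      q ^ m - q ^ (m - 1) ≤
        Set.ncard {x : Fin m → F | x ≠ 0 ∧ u * fDH k α x + ∑ j, v j * x j ≠ 0}) := by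
  subst hq
  obtain ⟨n, rfl⟩ : ∃ n, m = n + 1 := ⟨m - 1, by omega⟩
  simp only [Nat.add_sub_cancel] at hcond hk2 ⊢
  set c := Fintype.card F with hc
  have hq2 : 2 ≤ c := Fintype.one_lt_card
  have hq3 : 3 ≤ c := by obtain ⟨t, ht⟩ := hodd; omega
  set r := c - 1 with hr
  have hcr : c = r + 1 := by omega
  have hr2 : 2 ≤ r := by omega
  set S := ∑ i ∈ Finset.Icc 1 k, (n+1).choose i * r ^ i with hSdef
  set T' := ∑ i ∈ Finset.Icc 1 k, n.choose i * r ^ i with hT'def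
  set T'' := ∑ i ∈ Finset.Icc 1 (k-1), n.choose i * r ^ i with hT''def
  set A := ∑ i ∈ Finset.Icc 1 n, n.choose i * r ^ i with hAdef
  set Q1 := c ^ n with hQ1
  clear_value c r S T' T'' A Q1
  -- ARITHMETIC BLOCK (no counting hypotheses in context yet)
  have hk1' : 1 ≤ k := by omega
  have hrpos : 0 < r := by omega
  have hA : 1 + A = Q1 := by
    rw [hAdef, hr, hQ1]
    exact sum_Icc_choose_pow c n (by omega)
  have hT'A : T' ≤ A := by
    rw [hT'def, hAdef]
    apply Finset.sum_le_sum_of_subset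
    apply Finset.Icc_subset_Icc_right
    omega
  have hQ1pos : 1 ≤ Q1 := by rw [hQ1]; exact Nat.one_le_pow _ _ (by omega)
  have hQm : c ^ (n+1) = Q1 * c := by rw [hQ1, ← pow_succ]
  have hcm1 : 1 ≤ c ^ (n+1) := Nat.one_le_pow _ _ (by omega)
  have hE : Q1 * r + Q1 = c ^ (n+1) := by rw [hQm, hcr]; ring
  have hcond' : S + T' ≤ Q1 * r := by
    have hle : Q1 ≤ Q1 * r := Nat.le_mul_of_pos_right _ hrpos
    have h2 := hE
    generalize c ^ (n+1) = cm at hcond h2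
    generalize Q1 * r = P at hle h2 ⊢
    omega
  -- Pascal identity : S = T' + r + r * T''
  have hPascal : S = T' + r + r * T'' := by
    rw [hSdef]
    have hstep : ∀ i ∈ Finset.Icc 1 k, (n+1).choose i * r ^ i
        = n.choose i * r ^ i + n.choose (i-1) * r ^ i := by
      intro i hi
      rw [Finset.mem_Icc] at hi
      obtain ⟨t, rfl⟩ : ∃ t, i = t + 1 := ⟨i - 1, by omega⟩
      rw [Nat.choose_succ_succ, Nat.add_sub_cancel, add_mul, add_comm]
    rw [Finset.sum_congr rfl hstep, Finset.sum_add_distrib, ← hT'def, add_assoc]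
    congr 1
    have hR : ∑ i ∈ Finset.Icc 1 k, n.choose (i-1) * r ^ i
        = ∑ t ∈ Finset.Icc 0 (k-1), n.choose t * r ^ (t+1) := by
      apply Finset.sum_nbij' (fun i => i - 1) (fun t => t + 1)
      · intro i hi; rw [Finset.mem_Icc] at hi ⊢; omega
      · intro t ht; rw [Finset.mem_Icc] at ht ⊢; omega
      · intro i hi; rw [Finset.mem_Icc] at hi; omega
      · intro t ht; omega
      · intro i hi
        rw [Finset.mem_Icc] at hi
        rw [show i - 1 + 1 = i from by omega]
    rw [hR, show Finset.Icc 0 (k-1) = insert 0 (Finset.Icc 1 (k-1)) by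
        ext i; simp [Finset.mem_Icc]; omega,
      Finset.sum_insert (by simp)]
    simp only [Nat.choose_zero_right, zero_add, pow_one, one_mul]
    congr 1
    rw [hT''def, Finset.mul_sum]
    refine Finset.sum_congr rfl fun t _ => ?_
    rw [pow_succ]; ring
  have hT''r : r ≤ T'' := by
    have h1 : n.choose 1 * r ^ 1 ≤ T'' := by
      rw [hT''def]
      apply Finset.single_le_sum (f := fun i => n.choose i * r ^ i) (fun i _ => Nat.zero_le _)
      rw [Finset.mem_Icc]; omega
    have h2 : r ≤ n.choose 1 * r ^ 1 := by
      rw [Nat.choose_one_right, pow_one]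
      exact Nat.le_mul_of_pos_left _ (by omega)
    omega
  -- packaged arithmetic for the u=0 case
  have keyB : ∀ w : ℕ, w + Q1 = c ^ (n+1) → S ≤ w := by
    intro w hw
    have h2 := hE
    generalize c ^ (n+1) = cm at hw h2
    generalize Q1 * r = P at hcond' h2
    omega
  have keyC : ∀ w : ℕ, w + Q1 = c ^ (n+1) → c ^ (n+1) - Q1 ≤ w := by
    intro w hw
    generalize c ^ (n+1) = cm at hw ⊢
    omega
  -- packaged arithmetic for the main case
  have keyfinal : ∀ zc w' z1 z2 h b : ℕ,
      zc + w' + 1 = c ^ (n+1) →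
      zc ≤ z1 + z2 →
      z2 + h + 1 ≤ Q1 →
      z1 * r ≤ b →
      h + b = S →
      T'' ≤ h →
      S ≤ w' := by
    intro zc w' z1 z2 h b e0 e2 e3 e4 e5 e6
    have p1 := Nat.mul_le_mul_left r e2
    have p2 := Nat.mul_le_mul_left r e3
    have p3 := Nat.mul_le_mul_left r e6
    have p4 := Nat.mul_le_mul_left r hcond'
    have p5 : T' ≤ r * T' := Nat.le_mul_of_pos_left _ hrpos
    have hP := hPascal
    have hTr := hT''r
    have hfin : r * (S + zc + 1) ≤ r * (Q1 * r + Q1) := by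
      rw [Nat.mul_add, Nat.mul_add, Nat.mul_one, Nat.mul_add]
      rw [Nat.mul_add] at p1 p4
      rw [Nat.mul_add, Nat.mul_add, Nat.mul_one] at p2
      rw [Nat.mul_comm z1 r] at e4
      generalize r * S = a1 at p4 ⊢
      generalize r * zc = a2 at p1 ⊢
      generalize r * z1 = a3 at p1 e4
      generalize r * z2 = a4 at p1 p2
      generalize r * h = a5 at p2 p3
      generalize r * Q1 = a6 at p2 ⊢
      generalize r * (Q1 * r) = a7 at p4 ⊢
      generalize r * T' = a8 at p4 p5
      generalize r * T'' = a9 at p3 hP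
      omega
    rw [hE] at hfin
    have hSZ := Nat.le_of_mul_le_mul_left hfin hrpos
    generalize c ^ (n+1) = cm at e0 hSZ
    omega
  -- COUNTING BLOCK
  have hScount : ((univ : Finset (Fin (n+1) → F)).filter fun x =>
      (univ.filter fun j => x j ≠ 0).card ∈ Finset.Icc 1 k).card = S := by
    rw [card_wt_Icc 1 k, hSdef]
    refine Finset.sum_congr rfl fun i _ => ?_
    rw [Fintype.card_fin, ← hc, ← hr]
  have hcardfun : Fintype.card (Fin (n+1) → F) = c ^ (n+1) := by
    rw [Fintype.card_fun, Fintype.card_fin, ← hc]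
  have hfpos : ∀ x : Fin (n+1) → F, (univ.filter fun l => x l ≠ 0).card ≤ k →
      fDH k α x = α ((univ.filter fun l => x l ≠ 0).card) := fun x h => if_pos h
  have hfzero : ∀ x : Fin (n+1) → F, ¬ ((univ.filter fun l => x l ≠ 0).card ≤ k) →
      fDH k α x = 0 := fun x h => if_neg h
  -- the case u ≠ 0, v = 0 : exact count S
  have caseA : ∀ u : F, u ≠ 0 →
      ((univ : Finset (Fin (n+1) → F)).filter fun x =>
        x ≠ 0 ∧ u * fDH k α x + ∑ j, (0 : Fin (n+1) → F) j * x j ≠ 0).card = S := by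
    intro u hu
    rw [← hScount]
    refine congrArg Finset.card ?_
    apply Finset.filter_congr
    intro x _
    simp only [Pi.zero_apply, zero_mul, Finset.sum_const_zero, add_zero, Finset.mem_Icc]
    constructor
    · rintro ⟨hx0, hne⟩
      refine ⟨(wt_pos_iff x).mpr hx0, ?_⟩
      by_contra hgt
      exact hne (by rw [hfzero x hgt, mul_zero])
    · rintro ⟨h1, h2⟩
      refine ⟨(wt_pos_iff x).mp h1, ?_⟩
      rw [hfpos x h2]
      exact mul_ne_zero hu (hα _ h1 h2)
  -- the case u = 0 : exact count c^m - Q1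
  have caseB : ∀ v : Fin (n+1) → F, v ≠ 0 →
      ((univ : Finset (Fin (n+1) → F)).filter fun x =>
        x ≠ 0 ∧ (0:F) * fDH k α x + ∑ j, v j * x j ≠ 0).card + Q1 = c ^ (n+1) := by
    intro v hv
    obtain ⟨j, hvj⟩ := Function.ne_iff.mp hv
    rw [Pi.zero_apply] at hvj
    have hfe : ((univ : Finset (Fin (n+1) → F)).filter fun x =>
        x ≠ 0 ∧ (0:F) * fDH k α x + ∑ j, v j * x j ≠ 0)
        = (univ.filter fun x => ¬ (∑ l, v l * x l = 0)) := by
      apply Finset.filter_congr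
      intro x _
      simp only [zero_mul, zero_add]
      constructor
      · rintro ⟨_, h⟩; exact h
      · intro h
        refine ⟨?_, h⟩
        intro hx0
        apply h
        subst hx0
        simp
    rw [hfe]
    have hsplit := Finset.card_filter_add_card_filter_not
      (s := (univ : Finset (Fin (n+1) → F))) (p := fun x => ∑ l, v l * x l = 0)
    have hhyp : ((univ : Finset (Fin (n+1) → F)).filter fun x => ∑ l, v l * x l = 0).card
        = Q1 := by
      rw [card_hyperplane v j hvj 0, Fintype.card_fin, ← hc, hQ1]
      rfl
    rw [Finset.card_univ, hcardfun, hhyp] at hsplit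
    rw [add_comm] at hsplit
    exact hsplit
  refine ⟨?_, ?_, ?_⟩
  · -- Part 1 : minimum weight bound
    intro u v huv
    rw [ncard_eq_filter_card]
    by_cases hu : u = 0
    · subst hu
      have hv : v ≠ 0 := fun h => huv ⟨rfl, h⟩
      exact keyB _ (caseB v hv)
    · by_cases hv : v = 0
      · subst hv
        rw [caseA u hu]
      · -- main case u ≠ 0, v ≠ 0
        obtain ⟨j, hvj⟩ := Function.ne_iff.mp hv
        rw [Pi.zero_apply] at hvj
        have h0 := Finset.card_filter_add_card_filter_not
          (s := (univ : Finset (Fin (n+1) → F)).filter (fun x => x ≠ 0))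
          (p := fun x => u * fDH k α x + ∑ l, v l * x l = 0)
        rw [Finset.filter_filter, Finset.filter_filter] at h0
        have hWeq : ((univ : Finset (Fin (n+1) → F)).filter fun x =>
            x ≠ 0 ∧ u * fDH k α x + ∑ l, v l * x l ≠ 0)
            = ((univ : Finset (Fin (n+1) → F)).filter fun x =>
            x ≠ 0 ∧ ¬(u * fDH k α x + ∑ l, v l * x l = 0)) := by
          apply Finset.filter_congr; intro x _; exact Iff.rfl
        rw [hWeq]
        have hzcard : ((univ : Finset (Fin (n+1) → F)).filter fun x => x ≠ 0).card + 1
            = c ^ (n+1) := by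
          rw [show ((univ : Finset (Fin (n+1) → F)).filter fun x => x ≠ 0) = univ.erase 0 from
              Finset.filter_ne' _ _,
            Finset.card_erase_of_mem (mem_univ _), Finset.card_univ, hcardfun]
          exact Nat.sub_add_cancel hcm1
        rw [← h0] at hzcard
        have hZZ : ((univ : Finset (Fin (n+1) → F)).filter fun x =>
            x ≠ 0 ∧ u * fDH k α x + ∑ l, v l * x l = 0).card
            ≤ ((univ : Finset (Fin (n+1) → F)).filter fun x =>
              (univ.filter fun l => x l ≠ 0).card ∈ Finset.Icc 1 k ∧
                u * fDH k α x + ∑ l, v l * x l = 0).card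
            + ((univ : Finset (Fin (n+1) → F)).filter fun x =>
              ¬((univ.filter fun l => x l ≠ 0).card ≤ k) ∧ ∑ l, v l * x l = 0).card := by
          refine le_trans (Finset.card_le_card ?_) (Finset.card_union_le _ _)
          intro x hx
          simp only [mem_filter, mem_univ, true_and, Finset.mem_union, Finset.mem_Icc] at hx ⊢
          obtain ⟨hx0, hxz⟩ := hx
          by_cases hwk : (univ.filter fun l => x l ≠ 0).card ≤ k
          · exact Or.inl ⟨⟨(wt_pos_iff x).mpr hx0, hwk⟩, hxz⟩
          · refine Or.inr ⟨hwk, ?_⟩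
            rw [hfzero x hwk, mul_zero, zero_add] at hxz
            exact hxz
        have hZhiHlow : ((univ : Finset (Fin (n+1) → F)).filter fun x =>
              ¬((univ.filter fun l => x l ≠ 0).card ≤ k) ∧ ∑ l, v l * x l = 0).card
            + ((univ : Finset (Fin (n+1) → F)).filter fun x =>
              (univ.filter fun l => x l ≠ 0).card ∈ Finset.Icc 1 k ∧ ∑ l, v l * x l = 0).card
            + 1 ≤ Q1 := by
          have hhyp : ((univ : Finset (Fin (n+1) → F)).filter
              fun x => ∑ l, v l * x l = 0).card = Q1 := by
            rw [card_hyperplane v j hvj 0, Fintype.card_fin, ← hc, hQ1]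
            rfl
          rw [← hhyp]
          have hw0 : ((univ : Finset (Fin (n+1))).filter
              fun l => (0 : Fin (n+1) → F) l ≠ 0).card = 0 := by simp
          have hd1 : Disjoint
              ((univ : Finset (Fin (n+1) → F)).filter fun x =>
                ¬((univ.filter fun l => x l ≠ 0).card ≤ k) ∧ ∑ l, v l * x l = 0)
              ((univ : Finset (Fin (n+1) → F)).filter fun x =>
                (univ.filter fun l => x l ≠ 0).card ∈ Finset.Icc 1 k ∧ ∑ l, v l * x l = 0) := by
            rw [Finset.disjoint_left]
            intro x hx1 hx2
            simp only [mem_filter, mem_univ, true_and, Finset.mem_Icc] at hx1 hx2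
            exact hx1.1 hx2.1.2
          have hd2 : Disjoint
              (((univ : Finset (Fin (n+1) → F)).filter fun x =>
                ¬((univ.filter fun l => x l ≠ 0).card ≤ k) ∧ ∑ l, v l * x l = 0)
               ∪ ((univ : Finset (Fin (n+1) → F)).filter fun x =>
                (univ.filter fun l => x l ≠ 0).card ∈ Finset.Icc 1 k ∧ ∑ l, v l * x l = 0))
              ({0} : Finset (Fin (n+1) → F)) := by
            rw [Finset.disjoint_right]
            intro x hx hxu
            rw [Finset.mem_singleton] at hx
            subst hx
            rw [Finset.mem_union] at hxu
            rcases hxu with h | h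
            · simp only [mem_filter, mem_univ, true_and, hw0] at h
              exact h.1 (Nat.zero_le k)
            · simp only [mem_filter, mem_univ, true_and, Finset.mem_Icc, hw0] at h
              exact Nat.not_succ_le_zero 0 h.1.1
          calc _ = (((univ : Finset (Fin (n+1) → F)).filter fun x =>
                ¬((univ.filter fun l => x l ≠ 0).card ≤ k) ∧ ∑ l, v l * x l = 0)
               ∪ ((univ : Finset (Fin (n+1) → F)).filter fun x =>
                (univ.filter fun l => x l ≠ 0).card ∈ Finset.Icc 1 k ∧ ∑ l, v l * x l = 0)
               ∪ ({0} : Finset (Fin (n+1) → F))).card := by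
                rw [Finset.card_union_of_disjoint hd2, Finset.card_union_of_disjoint hd1,
                  Finset.card_singleton]
            _ ≤ _ := by
                apply Finset.card_le_card
                intro x hx
                simp only [Finset.mem_union, mem_filter, mem_univ, true_and,
                  Finset.mem_singleton] at hx ⊢
                rcases hx with (h | h) | h
                · exact h.2
                · exact h.2
                · subst h; simp
        have hBcard := card_scaling hα u hu v (fDH k α) hfpos
        rw [← hc, ← hr] at hBcard
        have h6 := Finset.card_filter_add_card_filter_not
          (s := (univ : Finset (Fin (n+1) → F)).filter (fun x =>
            (univ.filter fun l => x l ≠ 0).card ∈ Finset.Icc 1 k))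
          (p := fun x => ∑ l, v l * x l = 0)
        rw [Finset.filter_filter, Finset.filter_filter, hScount] at h6
        have hBeq : ((univ : Finset (Fin (n+1) → F)).filter fun x =>
            (univ.filter fun l => x l ≠ 0).card ∈ Finset.Icc 1 k ∧ ∑ l, v l * x l ≠ 0)
            = ((univ : Finset (Fin (n+1) → F)).filter fun x =>
            (univ.filter fun l => x l ≠ 0).card ∈ Finset.Icc 1 k ∧ ¬(∑ l, v l * x l = 0)) := by
          apply Finset.filter_congr; intro x _; exact Iff.rfl
        rw [hBeq] at hBcard
        have hHT : T'' ≤ ((univ : Finset (Fin (n+1) → F)).filter fun x =>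
            (univ.filter fun l => x l ≠ 0).card ∈ Finset.Icc 1 k ∧ ∑ l, v l * x l = 0).card := by
          have h7 := card_T2_le_Hlow v j hvj k hk1'
          have hsub : Fintype.card {t : Fin (n+1) // t ≠ j} = n := by
            rw [Fintype.card_subtype_compl, Fintype.card_fin, Fintype.card_subtype_eq]
            rfl
          have hTcount : ((univ : Finset ({t : Fin (n+1) // t ≠ j} → F)).filter fun y =>
              (univ.filter fun l => y l ≠ 0).card ∈ Finset.Icc 1 (k-1)).card = T'' := by
            rw [card_wt_Icc 1 (k-1), hT''def]
            refine Finset.sum_congr rfl fun i _ => ?_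
            rw [hsub, ← hc, ← hr]
          rw [hTcount] at h7
          exact h7
        exact keyfinal _ _ _ _ _ _ hzcard hZZ
          (by linarith [hZhiHlow]) hBcard h6 hHT
  · -- Part 2 : weight S is attained (u = 1, v = 0)
    refine ⟨1, 0, fun h => one_ne_zero h.1, ?_⟩
    rw [ncard_eq_filter_card]
    exact caseA 1 one_ne_zero
  · -- Part 3 : maximum weight is at least c^(n+1) - c^n
    have hm0 : 0 < n + 1 := Nat.succ_pos n
    have hene : (fun j : Fin (n+1) => if j = ⟨0, hm0⟩ then (1:F) else 0) ≠ 0 := by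
      apply Function.ne_iff.mpr
      exact ⟨⟨0, hm0⟩, by simp⟩
    refine ⟨0, (fun j : Fin (n+1) => if j = ⟨0, hm0⟩ then (1:F) else 0), ?_⟩
    rw [ncard_eq_filter_card]
    exact keyC _ (caseB _ hene)
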